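/- arXiv:1501.00625 — 2 statements merged into one kernel-verified Lean document; each statement's English description precedes it below -/
import Mathlib

section
/- The map G : L(w) → L²(𝕋, ℂ^{1×q}) defined by G(f) = conj(f h_♯*) = f̄ h_♯^T is a norm-preserving antilinear bijection, where w = h_♯* h_♯. -/
open MeasureTheory Complex Matrix
open scoped ENNReal InnerProductSpace ComplexOrder

/-- Normalized Lebesgue measure `dθ/(2π)` on `[-π,π)` (realized on `(-π,π]`). -/
noncomputable def sm : Measure ℝ :=
  (ENNReal.ofReal (2 * Real.pi)⁻¹) • (volume.restrict (Set.Ioc (-Real.pi) Real.pi))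

/-- Hardy class `H^p` on the unit circle, boundary-value formulation:
`f ∈ L^p` and all Fourier coefficients `∫ e^{imθ} f(e^{iθ}) dσ`, `m ≥ 1`, vanish. -/
def InHp (p : ℝ≥0∞) (f : ℝ → ℂ) : Prop :=
  MemLp f p sm ∧ ∀ m : ℤ, 1 ≤ m → (∫ θ, Complex.exp (m * θ * Complex.I) * f θ ∂sm) = 0

/-- Row-vector valued Hardy class `H²(𝕋, ℂ^{1×q})`. -/
def rowInH2 {q : ℕ} (f : ℝ → Fin q → ℂ) : Prop := ∀ j, InHp 2 (fun θ => f θ j)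

/-- Matrix valued Hardy class `H²(𝕋, ℂ^{q×q})`. -/
def matInH2 {q : ℕ} (h : ℝ → Matrix (Fin q) (Fin q) ℂ) : Prop :=
  ∀ i j, InHp 2 (fun θ => h θ i j)

/-- Outer matrix function: `det h` is a scalar outer function, i.e.
`log|det h(0)| = ∫ log|det h(e^{iθ})| dσ(θ)`, where `det h(0) = ∫ det h dσ`. -/
def OuterB {q : ℕ} (h : ℝ → Matrix (Fin q) (Fin q) ℂ) : Prop :=
  Real.log ‖∫ θ, (h θ).det ∂sm‖ =
    ∫ θ, Real.log ‖(h θ).det‖ ∂sm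

/-- Closed linear span `M_I^X` of the entries `X_j(k)`, `k ∈ I`, `j = 1,…,q`. -/
def spanX {q : ℕ} {H : Type*} [NormedAddCommGroup H] [InnerProductSpace ℂ H]
    (X : ℤ → Fin q → H) (I : Set ℤ) : Submodule ℂ H :=
  (Submodule.span ℂ {v | ∃ k ∈ I, ∃ j, v = X k j}).topologicalClosure

/-- `w` is the spectral density of the `q`-variate stationary process `X`:
`E[X(m) X(n)^*] = ∫ e^{-i(m-n)θ} w(e^{iθ}) dσ(θ)` entrywise. -/
def HasSpecDensity {q : ℕ} {H : Type*} [NormedAddCommGroup H] [InnerProductSpace ℂ H]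
    (X : ℤ → Fin q → H) (w : ℝ → Matrix (Fin q) (Fin q) ℂ) : Prop :=
  (∀ i j, Integrable (fun θ => w θ i j) sm) ∧
  (∀ᵐ θ ∂sm, (w θ).PosSemidef) ∧
  (∀ m n : ℤ, ∀ i j, ⟪X n j, X m i⟫_ℂ =
    ∫ θ, Complex.exp (-((m : ℂ) - (n : ℂ)) * (θ : ℂ) * Complex.I) * w θ i j ∂sm)

/-- Squared norm `‖f‖_w² = ∫ f w f^* dσ` in the weighted space `L(w)`. -/
noncomputable def wEnergy {q : ℕ} (w : ℝ → Matrix (Fin q) (Fin q) ℂ)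
    (f : ℝ → Fin q → ℂ) : ℝ :=
  ∫ θ, (dotProduct (Matrix.vecMul (f θ) (w θ)) (star (f θ))).re ∂sm

/-- Membership in the weighted space `L(w)`. -/
def memLw {q : ℕ} (w : ℝ → Matrix (Fin q) (Fin q) ℂ) (f : ℝ → Fin q → ℂ) : Prop :=
  AEStronglyMeasurable f sm ∧
  Integrable (fun θ => (dotProduct (Matrix.vecMul (f θ) (w θ)) (star (f θ))).re) sm

/-- Finite linear combinations of the functions `e_j(k)(z) = (0,…,z^{-k},…,0)`, `k ∈ I`. -/
def trigCombo {q : ℕ} (I : Set ℤ) (p : ℝ → Fin q → ℂ) : Prop :=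
  ∃ s : Finset ℤ, ↑s ⊆ I ∧ ∃ a : ℤ → Fin q → ℂ,
    p = fun (θ : ℝ) j => ∑ k ∈ s, a k j * Complex.exp (-(k : ℂ) * (θ : ℂ) * Complex.I)

/-- The set `H²(𝕋, ℂ^{1×q}) · h^{-1}` (boundary values). -/
def setH2h {q : ℕ} (h : ℝ → Matrix (Fin q) (Fin q) ℂ) : Set (ℝ → Fin q → ℂ) :=
  {f | ∃ v, rowInH2 v ∧ ∀ᵐ θ ∂sm, f θ = Matrix.vecMul (v θ) ((h θ)⁻¹)}

/-- The set `conj(H²(𝕋, ℂ^{1×q})) · (h_♯^*)^{-1}` (boundary values). -/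
def setConjH2hs {q : ℕ} (hs : ℝ → Matrix (Fin q) (Fin q) ℂ) : Set (ℝ → Fin q → ℂ) :=
  {f | ∃ u, rowInH2 u ∧ ∀ᵐ θ ∂sm, f θ = Matrix.vecMul (star (u θ)) (((hs θ)ᴴ)⁻¹)}

/-- The set `z^{-1} · conj(H²(𝕋, ℂ^{1×q})) · (h_♯^*)^{-1}` (boundary values). -/
def setConjH2hsNeg {q : ℕ} (hs : ℝ → Matrix (Fin q) (Fin q) ℂ) : Set (ℝ → Fin q → ℂ) :=
  {f | ∃ u, rowInH2 u ∧ ∀ᵐ θ ∂sm,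
    f θ = Complex.exp (-((θ : ℂ) * Complex.I)) • Matrix.vecMul (star (u θ)) (((hs θ)ᴴ)⁻¹)}

noncomputable instance matMS' {q : ℕ} : MeasurableSpace (Matrix (Fin q) (Fin q) ℂ) :=
  (inferInstance : MeasurableSpace (Fin q → Fin q → ℂ))

instance matBorel' {q : ℕ} : BorelSpace (Matrix (Fin q) (Fin q) ℂ) :=
  (inferInstance : BorelSpace (Fin q → Fin q → ℂ))

lemma measurable_matInv {q : ℕ} : Measurable (fun A : Matrix (Fin q) (Fin q) ℂ => A⁻¹) := by
  have h : (fun A : Matrix (Fin q) (Fin q) ℂ => A⁻¹) = fun A => A.det⁻¹ • A.adjugate := by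
    funext A; rw [Matrix.inv_def, Ring.inverse_eq_inv']
  rw [h]
  exact ((continuous_id.matrix_det.measurable).inv).smul continuous_id.matrix_adjugate.measurable

lemma measurable_matCT {q : ℕ} : Measurable (fun A : Matrix (Fin q) (Fin q) ℂ => Aᴴ) := by
  refine measurable_pi_lambda _ fun i => measurable_pi_lambda _ fun j => ?_
  have : Measurable (fun A : Matrix (Fin q) (Fin q) ℂ => A j i) :=
    (measurable_pi_apply i).comp (measurable_pi_apply j)
  exact continuous_star.measurable.comp this

lemma quadForm_eq {q : ℕ} (A : Matrix (Fin q) (Fin q) ℂ) (v : Fin q → ℂ) :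
    (dotProduct (Matrix.vecMul v (Aᴴ * A)) (star v)).re
      = ∑ j, ‖(Matrix.vecMul v Aᴴ) j‖ ^ 2 := by
  have h3 : A *ᵥ star v = star (Matrix.vecMul v Aᴴ) := by
    rw [Matrix.star_vecMul, Matrix.conjTranspose_conjTranspose]
  rw [← Matrix.vecMul_vecMul, ← Matrix.dotProduct_mulVec, h3]
  rw [show dotProduct (Matrix.vecMul v Aᴴ) (star (Matrix.vecMul v Aᴴ))
      = ∑ j, (Matrix.vecMul v Aᴴ) j * star ((Matrix.vecMul v Aᴴ) j) from rfl]
  rw [Complex.re_sum]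
  refine Finset.sum_congr rfl fun j _ => ?_
  simp [Complex.star_def, Complex.mul_conj, Complex.normSq_eq_norm_sq,
    ← Complex.ofReal_pow]

lemma aemeasurable_pi_of {α : Type*} {ι : Type*} [Countable ι] {β : ι → Type*}
    [MeasurableSpace α] [∀ i, MeasurableSpace (β i)] {μ : MeasureTheory.Measure α}
    {F : α → ∀ i, β i} (h : ∀ i, AEMeasurable (fun a => F a i) μ) : AEMeasurable F μ := by
  choose G hGm hGe using h
  refine ⟨fun a i => G i a, measurable_pi_lambda _ hGm, ?_⟩
  have hall : ∀ᵐ a ∂μ, ∀ i, F a i = G i a := (MeasureTheory.ae_all_iff).2 hGe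
  filter_upwards [hall] with a ha
  funext i
  exact ha i

/-- The map `G : L(w) → L²(𝕋, ℂ^{1×q})`, `G(f) = conj(f h_♯^*)`, where `w = h_♯^* h_♯`,
is a norm-preserving antilinear bijection (antilinear, isometric, injective and surjective
modulo null sets). -/
theorem Gmap_antilinear_isometric_bijective
    {q : ℕ} (w hs : ℝ → Matrix (Fin q) (Fin q) ℂ)
    (G : (ℝ → Fin q → ℂ) → (ℝ → Fin q → ℂ))
    (hGdef : G = fun f θ => star (Matrix.vecMul (f θ) ((hs θ)ᴴ)))
    (hwint : ∀ i j, Integrable (fun θ => w θ i j) sm)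
    (hwpos : ∀ᵐ θ ∂sm, (w θ).PosSemidef ∧ (w θ).det ≠ 0)
    (hlog : Integrable (fun θ => Real.log ‖(w θ).det‖) sm)
    (hhs : matInH2 hs) (houter : OuterB hs)
    (hfac : ∀ᵐ θ ∂sm, w θ = (hs θ)ᴴ * hs θ) :
    (∀ (a : ℂ) (f g : ℝ → Fin q → ℂ),
        G (fun θ => a • f θ + g θ) = fun θ => (starRingEnd ℂ a) • G f θ + G g θ) ∧
    (∀ f : ℝ → Fin q → ℂ, memLw w f →
        (∫ θ, (∑ j, ‖G f θ j‖ ^ 2) ∂sm) = wEnergy w f) ∧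
    (∀ f₁ f₂ : ℝ → Fin q → ℂ, memLw w f₁ → memLw w f₂ →
        (∀ᵐ θ ∂sm, G f₁ θ = G f₂ θ) → ∀ᵐ θ ∂sm, f₁ θ = f₂ θ) ∧
    (∀ g : ℝ → Fin q → ℂ, (∀ j, MemLp (fun θ => g θ j) 2 sm) →
        ∃ f : ℝ → Fin q → ℂ, memLw w f ∧ ∀ᵐ θ ∂sm, G f θ = g θ) := by
  
  subst hGdef
  have hgood : ∀ᵐ θ ∂sm, w θ = (hs θ)ᴴ * hs θ ∧ IsUnit ((hs θ)ᴴ).det := by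
    filter_upwards [hwpos, hfac] with θ hp hf
    refine ⟨hf, ?_⟩
    rw [isUnit_iff_ne_zero]
    intro h0
    exact hp.2 (by rw [hf, Matrix.det_mul, h0, zero_mul])
  refine ⟨?_, ?_, ?_, ?_⟩
  · intro a f g
    funext θ
    show star ((a • f θ + g θ) ᵥ* (hs θ)ᴴ) = _
    rw [Matrix.add_vecMul, Matrix.smul_vecMul, star_add, star_smul, starRingEnd_apply]
  · intro f _
    unfold wEnergy
    refine integral_congr_ae ?_
    filter_upwards [hgood] with θ hpair
    obtain ⟨hw, -⟩ := hpair
    simp only [hw, quadForm_eq]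
    exact Finset.sum_congr rfl fun j _ => by simp
  · intro f₁ f₂ _ _ hae
    filter_upwards [hgood, hae] with θ hpair he
    obtain ⟨hw, hu⟩ := hpair
    have h2 : Matrix.vecMul (f₁ θ) ((hs θ)ᴴ) = Matrix.vecMul (f₂ θ) ((hs θ)ᴴ) := by
      have := congrArg star he
      simpa using this
    calc f₁ θ = Matrix.vecMul (Matrix.vecMul (f₁ θ) ((hs θ)ᴴ)) ((hs θ)ᴴ)⁻¹ := by
          rw [Matrix.vecMul_vecMul, Matrix.mul_nonsing_inv _ hu, Matrix.vecMul_one]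
      _ = Matrix.vecMul (Matrix.vecMul (f₂ θ) ((hs θ)ᴴ)) ((hs θ)ᴴ)⁻¹ := by rw [h2]
      _ = f₂ θ := by rw [Matrix.vecMul_vecMul, Matrix.mul_nonsing_inv _ hu, Matrix.vecMul_one]
  · intro g hg
    set f : ℝ → Fin q → ℂ := fun θ => Matrix.vecMul (star (g θ)) (((hs θ)ᴴ)⁻¹) with hfdef
    have hkey : ∀ᵐ θ ∂sm, Matrix.vecMul (f θ) ((hs θ)ᴴ) = star (g θ) := by
      filter_upwards [hgood] with θ hpair
      obtain ⟨-, hu⟩ := hpair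
      show Matrix.vecMul (Matrix.vecMul (star (g θ)) (((hs θ)ᴴ)⁻¹)) ((hs θ)ᴴ) = star (g θ)
      rw [Matrix.vecMul_vecMul, Matrix.nonsing_inv_mul _ hu, Matrix.vecMul_one]
    have hmeasM : AEMeasurable (fun θ => ((hs θ)ᴴ)⁻¹) sm := by
      have h1 : AEMeasurable (fun θ => hs θ) sm :=
        aemeasurable_pi_of fun i => aemeasurable_pi_of fun j => (hhs i j).1.1.aemeasurable
      exact (measurable_matInv.comp measurable_matCT).comp_aemeasurable h1
    have hfm : AEMeasurable f sm := by
      refine aemeasurable_pi_of fun j => ?_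
      have he : (fun θ => f θ j) = fun θ => ∑ i, star (g θ i) * ((hs θ)ᴴ)⁻¹ i j := by
        funext θ
        simp [hfdef, Matrix.vecMul, dotProduct]
      rw [he]
      refine Finset.aemeasurable_fun_sum _ fun i _ => ?_
      have hgi : AEMeasurable (fun θ => star (g θ i)) sm :=
        continuous_star.measurable.comp_aemeasurable (hg i).1.aemeasurable
      have hMi : AEMeasurable (fun θ => ((hs θ)ᴴ)⁻¹ i j) sm :=
        (show Measurable (fun A : Matrix (Fin q) (Fin q) ℂ => A i j) from
          (measurable_pi_apply j).comp (measurable_pi_apply i)).comp_aemeasurable hmeasM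
      exact hgi.mul hMi
    have hint : Integrable
        (fun θ => (dotProduct (Matrix.vecMul (f θ) (w θ)) (star (f θ))).re) sm := by
      have hI : Integrable (fun θ => ∑ j, ‖g θ j‖ ^ 2) sm :=
        integrable_finset_sum _ fun j _ => (hg j).norm.integrable_sq
      refine hI.congr ?_
      filter_upwards [hgood, hkey] with θ hpair hk
      obtain ⟨hw, -⟩ := hpair
      rw [hw, quadForm_eq, hk]
      exact Finset.sum_congr rfl fun j _ => by simp
    refine ⟨f, ⟨hfm.aestronglyMeasurable, hint⟩, ?_⟩
    filter_upwards [hkey] with θ hk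
    show star (Matrix.vecMul (f θ) ((hs θ)ᴴ)) = g θ
    rw [hk, star_star]
end

section
/- Let f, g ∈ H²(𝕋) (scalar Hardy space) satisfy e^{-iθ} (conj(f(e^{iθ})))² = (g(e^{iθ}))² a.e. Then g = 0 (and hence f = 0). -/
open MeasureTheory Complex Matrix
open scoped ENNReal InnerProductSpace ComplexOrder

noncomputable section
open AddCircle

namespace HardyAux

instance fact_two_pi_pos : Fact (0 < 2 * Real.pi) := ⟨by positivity⟩

lemma fourierCoeff_congr_ae {f g : AddCircle (2 * Real.pi) → ℂ}
    (h : f =ᵐ[haarAddCircle] g) (n : ℤ) : fourierCoeff f n = fourierCoeff g n := by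
  unfold fourierCoeff
  exact integral_congr_ae (h.mono fun x hx => by simp only [hx])

lemma fourierCoeff_eq (G : AddCircle (2 * Real.pi) → ℂ) (n : ℤ) :
    fourierCoeff G n = ∫ t, fourier (-n) t * G t ∂haarAddCircle := by
  unfold fourierCoeff
  simp only [smul_eq_mul]

lemma norm_fourier_eq_one (m : ℤ) (x : AddCircle (2 * Real.pi)) : ‖fourier m x‖ = 1 := by
  rw [fourier_apply]
  exact Circle.norm_coe _

lemma parseval_mul {G : AddCircle (2 * Real.pi) → ℂ} (hG : MemLp G 2 haarAddCircle) (n : ℤ) :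
    (∫ x, fourier (-n) x * (G x * G x) ∂haarAddCircle)
      = ∑' k : ℤ, fourierCoeff G (n - k) * fourierCoeff G k := by
  set A : AddCircle (2 * Real.pi) → ℂ := fun x => fourier n x * (starRingEnd ℂ) (G x) with hAdef
  have hAmeas : AEStronglyMeasurable A haarAddCircle :=
    ((fourier n).continuous.aestronglyMeasurable).mul
      (RCLike.continuous_conj.comp_aestronglyMeasurable hG.1)
  have hA2 : MemLp A 2 haarAddCircle := by
    refine hG.of_le hAmeas (Filter.Eventually.of_forall fun x => ?_)
    simp [A, norm_mul, norm_fourier_eq_one, Circle.norm_coe]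
  set AL : Lp ℂ 2 haarAddCircle := hA2.toLp A with hAL
  set Gl : Lp ℂ 2 haarAddCircle := hG.toLp G with hGL
  have h1 : ⟪AL, Gl⟫_ℂ = ∫ x, fourier (-n) x * (G x * G x) ∂haarAddCircle := by
    rw [MeasureTheory.L2.inner_def]
    apply integral_congr_ae
    filter_upwards [hA2.coeFn_toLp, hG.coeFn_toLp] with x hx1 hx2
    rw [hx1, hx2]
    simp only [RCLike.inner_apply, A, _root_.map_mul, RingHomCompTriple.comp_apply,
      RingHom.id_apply, Complex.conj_conj, ← fourier_neg]
    ring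
  have h2 : ∀ k : ℤ, ⟪(fourierBasis (T := 2 * Real.pi)) k, Gl⟫_ℂ = fourierCoeff G k := by
    intro k
    rw [← HilbertBasis.repr_apply_apply, fourierBasis_repr]
    exact fourierCoeff_congr_ae hG.coeFn_toLp k
  have h3 : ∀ k : ℤ, ⟪AL, (fourierBasis (T := 2 * Real.pi)) k⟫_ℂ = fourierCoeff G (n - k) := by
    intro k
    rw [← inner_conj_symm, ← HilbertBasis.repr_apply_apply, fourierBasis_repr,
      fourierCoeff_congr_ae hA2.coeFn_toLp k]
    unfold fourierCoeff
    rw [← integral_conj]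
    congr 1
    funext t
    simp only [smul_eq_mul, A, _root_.map_mul, RingHomCompTriple.comp_apply, RingHom.id_apply,
      Complex.conj_conj, ← fourier_neg, neg_neg]
    rw [show -(n - k) = k + -n by ring, fourier_add]
    ring
  rw [← h1, ← (fourierBasis (T := 2 * Real.pi)).tsum_inner_mul_inner AL Gl]
  exact tsum_congr fun k => by rw [h2 k, h3 k]

lemma vanish_mul {G : AddCircle (2 * Real.pi) → ℂ} (hG : MemLp G 2 haarAddCircle)
    (h0 : ∀ k : ℤ, k < 0 → fourierCoeff G k = 0) {n : ℤ} (hn : n < 0) :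
    (∫ x, fourier (-n) x * (G x * G x) ∂haarAddCircle) = 0 := by
  rw [parseval_mul hG n]
  have : ∀ k : ℤ, fourierCoeff G (n - k) * fourierCoeff G k = 0 := by
    intro k
    rcases lt_or_ge k 0 with h | h
    · rw [h0 k h, mul_zero]
    · rw [h0 (n - k) (by omega), zero_mul]
  simp [this]

end HardyAux

open HardyAux

/-- If `f, g ∈ H²(𝕋)` satisfy `e^{-iθ} (conj f(e^{iθ}))² = (g(e^{iθ}))²` a.e., then
`g = 0` and hence `f = 0`. -/
theorem hardy_sq_relation_implies_zero
    (f g : ℝ → ℂ) (hf : InHp 2 f) (hg : InHp 2 g)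
    (hrel : ∀ᵐ θ ∂sm,
      Complex.exp (-(Complex.ofReal θ * Complex.I)) * (starRingEnd ℂ (f θ)) ^ 2
        = (g θ) ^ 2) :
    (∀ᵐ θ ∂sm, g θ = 0) ∧ (∀ᵐ θ ∂sm, f θ = 0) := by
  have hπ : (0:ℝ) < 2 * Real.pi := by positivity
  have hIoc : -Real.pi + 2 * Real.pi = Real.pi := by ring
  -- measure preserving quotient map
  have hmp : MeasurePreserving ((↑) : ℝ → AddCircle (2 * Real.pi)) sm haarAddCircle := by
    refine ⟨AddCircle.measurable_mk', ?_⟩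
    have h1 := (AddCircle.measurePreserving_mk (2 * Real.pi) (-Real.pi)).map_eq
    rw [hIoc] at h1
    rw [sm, Measure.map_smul, h1, AddCircle.volume_eq_smul_haarAddCircle, smul_smul,
      ← ENNReal.ofReal_mul (by positivity), inv_mul_cancel₀ (ne_of_gt hπ),
      ENNReal.ofReal_one, one_smul]
  have hae : ∀ᵐ θ ∂sm, θ ∈ Set.Ioc (-Real.pi) Real.pi := by
    rw [sm, Measure.ae_ennreal_smul_measure_eq (by positivity)]
    exact ae_restrict_mem measurableSet_Ioc
  -- measurable representatives
  have hfm := hf.1.aestronglyMeasurable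
  have hgm := hg.1.aestronglyMeasurable
  set f' := hfm.mk f with hf'def
  set g' := hgm.mk g with hg'def
  have hff' : f =ᵐ[sm] f' := hfm.ae_eq_mk
  have hgg' : g =ᵐ[sm] g' := hgm.ae_eq_mk
  set F : AddCircle (2 * Real.pi) → ℂ := AddCircle.liftIoc (2 * Real.pi) (-Real.pi) f' with hFdef
  set G : AddCircle (2 * Real.pi) → ℂ := AddCircle.liftIoc (2 * Real.pi) (-Real.pi) g' with hGdef
  have hcoe : Measurable fun x : AddCircle (2 * Real.pi) =>
      ((AddCircle.equivIoc (2 * Real.pi) (-Real.pi) x : ℝ)) :=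
    measurable_subtype_coe.comp (AddCircle.measurableEquivIoc (T := 2 * Real.pi) (-Real.pi)).measurable
  have hFmeas : Measurable F := (hfm.stronglyMeasurable_mk.measurable).comp hcoe
  have hGmeas : Measurable G := (hgm.stronglyMeasurable_mk.measurable).comp hcoe
  have hFf : ∀ᵐ θ ∂sm, F ((θ : ℝ) : AddCircle (2 * Real.pi)) = f θ := by
    filter_upwards [hae, hff'] with θ h1 h2
    rw [hFdef, AddCircle.liftIoc_coe_apply (by rw [hIoc]; exact h1), ← h2]
  have hGg : ∀ᵐ θ ∂sm, G ((θ : ℝ) : AddCircle (2 * Real.pi)) = g θ := by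
    filter_upwards [hae, hgg'] with θ h1 h2
    rw [hGdef, AddCircle.liftIoc_coe_apply (by rw [hIoc]; exact h1), ← h2]
  -- transfer of integrals
  have hTr : ∀ (φ : AddCircle (2 * Real.pi) → ℂ), AEStronglyMeasurable φ haarAddCircle →
      (∫ x, φ x ∂haarAddCircle) = ∫ θ : ℝ, φ ((θ : ℝ) : AddCircle (2 * Real.pi)) ∂sm := by
    intro φ hφ
    rw [← hmp.map_eq, integral_map hmp.measurable.aemeasurable (by rwa [hmp.map_eq])]
  -- MemLp on the circle
  have hF2 : MemLp F 2 haarAddCircle := by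
    refine ⟨hFmeas.aestronglyMeasurable, ?_⟩
    rw [← hmp.map_eq, eLpNorm_map_measure (by rw [hmp.map_eq]; exact hFmeas.aestronglyMeasurable)
      hmp.measurable.aemeasurable]
    have hco : (F ∘ fun θ : ℝ => ((θ : ℝ) : AddCircle (2 * Real.pi))) =ᵐ[sm] f := by
      filter_upwards [hFf] with θ h; exact h
    rw [eLpNorm_congr_ae hco]
    exact hf.1.2
  have hG2 : MemLp G 2 haarAddCircle := by
    refine ⟨hGmeas.aestronglyMeasurable, ?_⟩
    rw [← hmp.map_eq, eLpNorm_map_measure (by rw [hmp.map_eq]; exact hGmeas.aestronglyMeasurable)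
      hmp.measurable.aemeasurable]
    have hco : (G ∘ fun θ : ℝ => ((θ : ℝ) : AddCircle (2 * Real.pi))) =ᵐ[sm] g := by
      filter_upwards [hGg] with θ h; exact h
    rw [eLpNorm_congr_ae hco]
    exact hg.1.2
  have h2pine : ((2 * Real.pi : ℝ) : ℂ) ≠ 0 := Complex.ofReal_ne_zero.mpr (ne_of_gt hπ)
  have hπc : (Real.pi : ℂ) ≠ 0 := Complex.ofReal_ne_zero.mpr Real.pi_ne_zero
  have harg : ∀ (m : ℤ) (θ : ℝ),
      2 * (Real.pi : ℂ) * Complex.I * (m : ℂ) * (θ : ℂ) / ((2 * Real.pi : ℝ) : ℂ)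
        = (m : ℂ) * θ * Complex.I := by
    intro m θ
    push_cast
    field_simp
  -- negative Fourier coefficients of F and G vanish
  have hcoeff : ∀ (u : ℝ → ℂ) (U : AddCircle (2 * Real.pi) → ℂ), Measurable U →
      (∀ᵐ θ ∂sm, U ((θ : ℝ) : AddCircle (2 * Real.pi)) = u θ) →
      (∀ m : ℤ, 1 ≤ m → (∫ θ, Complex.exp (m * θ * Complex.I) * u θ ∂sm) = 0) →
      ∀ k : ℤ, k < 0 → fourierCoeff U k = 0 := by
    intro u U hU hUu hu k hk
    have htr := hTr (fun x => fourier (-k) x * U x)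
      (((map_continuous (fourier (-k))).measurable.mul hU).aestronglyMeasurable)
    rw [fourierCoeff_eq, htr]
    have heq : ∀ᵐ θ ∂sm, fourier (-k) ((θ : ℝ) : AddCircle (2 * Real.pi)) * U ((θ: ℝ) : AddCircle (2 * Real.pi))
        = Complex.exp ((-k : ℤ) * θ * Complex.I) * u θ := by
      filter_upwards [hUu] with θ h
      rw [h, fourier_coe_apply, harg (-k) θ]
    rw [integral_congr_ae heq]
    exact hu (-k) (by omega)
  have hbF : ∀ k : ℤ, k < 0 → fourierCoeff F k = 0 := hcoeff f F hFmeas hFf hf.2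
  have hbG : ∀ k : ℤ, k < 0 → fourierCoeff G k = 0 := hcoeff g G hGmeas hGg hg.2
  -- nonnegative "coefficients" of G² vanish via the relation with f
  have hcpos : ∀ n : ℤ, 0 ≤ n →
      (∫ x, fourier (-n) x * (G x * G x) ∂haarAddCircle) = 0 := by
    intro n hn
    have htr := hTr (fun x => fourier (-n) x * (G x * G x))
      (((map_continuous (fourier (-n))).measurable.mul (hGmeas.mul hGmeas)).aestronglyMeasurable)
    rw [htr]
    have key : ∀ᵐ θ ∂sm, fourier (-n) ((θ : ℝ) : AddCircle (2 * Real.pi)) *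
        (G ((θ:ℝ) : AddCircle (2 * Real.pi)) * G ((θ:ℝ) : AddCircle (2 * Real.pi)))
        = starRingEnd ℂ (Complex.exp (((n:ℂ) + 1) * θ * Complex.I) * (f θ * f θ)) := by
      filter_upwards [hGg, hrel] with θ h1 h2
      have hc : (starRingEnd ℂ) (((n:ℂ) + 1) * (θ:ℂ) * Complex.I)
          = -(((n:ℂ) + 1) * θ * Complex.I) := by
        simp only [_root_.map_mul, _root_.map_add, _root_.map_one, map_intCast,
          Complex.conj_ofReal, Complex.conj_I]
        ring
      rw [h1, fourier_coe_apply, show g θ * g θ = g θ ^ 2 by ring, ← h2,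
        _root_.map_mul, ← Complex.exp_conj, hc, _root_.map_mul, harg (-n) θ]
      rw [show Complex.exp (-(((n:ℂ)+1) * θ * Complex.I))
            = Complex.exp (((-n:ℤ):ℂ) * θ * Complex.I) * Complex.exp (-((θ:ℂ) * Complex.I)) by
          rw [← Complex.exp_add]; congr 1; push_cast; ring]
      ring
    rw [integral_congr_ae key, integral_conj]
    suffices h : (∫ θ : ℝ, Complex.exp (((n:ℂ) + 1) * θ * Complex.I) * (f θ * f θ) ∂sm) = 0 by
      rw [h, map_zero]
    have hv := vanish_mul hF2 hbF (n := -(n+1)) (by omega)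
    rw [hTr (fun x => fourier (-(-(n+1))) x * (F x * F x))
      (((map_continuous (fourier (-(-(n+1))))).measurable.mul
        (hFmeas.mul hFmeas)).aestronglyMeasurable)] at hv
    rw [← hv]
    apply integral_congr_ae
    filter_upwards [hFf] with θ h
    rw [h, neg_neg, fourier_coe_apply, harg (n+1) θ]
    push_cast
    ring
  -- all convolution sums vanish
  have hcall : ∀ n : ℤ, (∑' k : ℤ, fourierCoeff G (n - k) * fourierCoeff G k) = 0 := by
    intro n
    rcases lt_or_ge n 0 with h | h
    · rw [← parseval_mul hG2 n]; exact vanish_mul hG2 hbG h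
    · rw [← parseval_mul hG2 n]; exact hcpos n h
  -- induction: all Fourier coefficients of G vanish
  have ha0 : ∀ n : ℤ, fourierCoeff G n = 0 := by
    have hnat : ∀ N : ℕ, fourierCoeff G (N : ℤ) = 0 := by
      intro N
      induction N using Nat.strong_induction_on with
      | _ N ih =>
        have key : ∀ m : ℤ, m < (N : ℤ) → fourierCoeff G m = 0 := by
          intro m hm
          rcases lt_or_ge m 0 with h | h
          · exact hbG m h
          · lift m to ℕ using h with m'
            exact ih m' (by exact_mod_cast hm)
        have h := hcall (2 * N)
        rw [tsum_eq_single (N : ℤ) ?_] at h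
        · rw [show (2 * (N:ℤ) - N) = (N:ℤ) by ring] at h
          exact mul_self_eq_zero.mp h
        · intro k hk
          rcases lt_or_gt_of_ne hk with hlt | hgt
          · rw [key k hlt, mul_zero]
          · rw [key (2 * N - k) (by omega), zero_mul]
    intro n
    rcases lt_or_ge n 0 with h | h
    · exact hbG n h
    · lift n to ℕ using h; exact hnat n
  -- conclude G = 0 a.e.
  have hGzero : ∀ᵐ x ∂(haarAddCircle (T := 2 * Real.pi)), G x = 0 := by
    set Gl2 : Lp ℂ 2 (haarAddCircle (T := 2 * Real.pi)) := hG2.toLp G with hGl2def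
    have hrepr : (fourierBasis (T := 2 * Real.pi)).repr Gl2 = 0 := by
      apply lp.ext
      funext k
      rw [fourierBasis_repr, fourierCoeff_congr_ae hG2.coeFn_toLp k]
      rw [ha0 k]; rfl
    have hGl2 : Gl2 = 0 := by
      apply (fourierBasis (T := 2 * Real.pi)).repr.injective
      rw [hrepr, map_zero]
    have h1 := hG2.coeFn_toLp
    rw [show hG2.toLp G = 0 from hGl2def ▸ hGl2] at h1
    filter_upwards [h1.symm, Lp.coeFn_zero ℂ 2 (haarAddCircle (T := 2 * Real.pi))] with x hx1 hx2
    rw [hx1, hx2]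
    rfl
  have hg0 : ∀ᵐ θ ∂sm, g θ = 0 := by
    have h2 : ∀ᵐ θ ∂sm, G ((θ:ℝ) : AddCircle (2 * Real.pi)) = 0 := by
      exact ae_of_ae_map (p := fun x : AddCircle (2 * Real.pi) => G x = 0)
        hmp.measurable.aemeasurable (by rw [hmp.map_eq]; exact hGzero)
    filter_upwards [h2, hGg] with θ h1 h2'
    rw [← h2', h1]
  refine ⟨hg0, ?_⟩
  filter_upwards [hg0, hrel] with θ h1 h2
  have hz : Complex.exp (-(Complex.ofReal θ * Complex.I)) * (starRingEnd ℂ (f θ)) ^ 2 = 0 := by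
    rw [h2, h1]; ring
  have h3 : (starRingEnd ℂ (f θ)) ^ 2 = 0 := by
    rcases mul_eq_zero.mp hz with h | h
    · exact absurd h (Complex.exp_ne_zero _)
    · exact h
  have h4 := pow_eq_zero_iff (n := 2) (by norm_num) |>.mp h3
  simpa using congrArg (starRingEnd ℂ) h4
end
end
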